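/- arXiv:1807.07022 — 3 statements merged into one kernel-verified Lean document; each statement's English description precedes it below -/
import Mathlib

section
/- Soundness of the Free rule: for every n ∈ ℕ and every function dictionary Δ, if R = [x, m] ∗ ⊛_{0 ≤ i < m} ⟨x,i⟩ ↦ eᵢ with Vars({x} ∪ {e₀,…,e_{m−1}}) ⊆ Γ, and the specification Σ; Γ; {φ; P} c {Q} is n-valid w.r.t. Δ, then the specification Σ; Γ; {φ; P ∗ R} (free(x); c) {Q} is n-valid w.r.t. Δ. -/
set_option maxHeartbeats 1000000
namespace SSL

/-! ## Basic syntax: variables, values, locations -/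

abbrev Var := String
abbrev Val := Int
abbrev Loc := ℕ

/-- Expressions of the programming language (also used as pure formulae). -/
inductive Expr : Type
  | lit : Val → Expr
  | var : Var → Expr
  | add : Expr → Expr → Expr
  | eq : Expr → Expr → Expr
  | and : Expr → Expr → Expr
  | not : Expr → Expr
  deriving DecidableEq

/-- Stores: finite maps from program variables to values. -/
abbrev Store := Finmap (fun _ : Var => Val)
/-- Heaps: finite partial maps from locations to values. -/
abbrev Heap := Finmap (fun _ : Loc => Val)

/-- Valuation of an expression under a store. -/
def Expr.eval : Expr → Store → Option Val
  | .lit v, _ => some v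
  | .var x, s => s.lookup x
  | .add e₁ e₂, s => do pure ((← e₁.eval s) + (← e₂.eval s))
  | .eq e₁ e₂, s => do pure (if (← e₁.eval s) = (← e₂.eval s) then (1 : Val) else 0)
  | .and e₁ e₂, s => do
      pure (if ((← e₁.eval s) = (1 : Val) ∧ (← e₂.eval s) = (1 : Val)) then (1 : Val) else 0)
  | .not e, s => do pure (if (← e.eval s) = (1 : Val) then (0 : Val) else 1)

/-- A (boolean) expression is true under a store. -/
def Expr.holds (e : Expr) (s : Store) : Prop := e.eval s = some 1

/-- Validity of the pure implication φ ⇒ ψ. -/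
def PImplies (φ ψ : Expr) : Prop := ∀ s : Store, φ.holds s → ψ.holds s

def Expr.vars : Expr → Finset Var
  | .lit _ => ∅
  | .var x => {x}
  | .add e₁ e₂ => e₁.vars ∪ e₂.vars
  | .eq e₁ e₂ => e₁.vars ∪ e₂.vars
  | .and e₁ e₂ => e₁.vars ∪ e₂.vars
  | .not e => e.vars

/-! ## Substitutions -/

abbrev Subst := Var → Option Expr

def Subst.single (x : Var) (e : Expr) : Subst := fun z => if z = x then some e else none

def Subst.ofList (l : List (Var × Expr)) : Subst := fun x => l.lookup x

/-- Union of substitutions (left-biased). -/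
def Subst.union (σ₁ σ₂ : Subst) : Subst := fun x => (σ₁ x).orElse (fun _ => σ₂ x)

def Subst.domain (σ : Subst) : Set Var := {x | (σ x).isSome}

/-- σ is a substitution of values (literals) for exactly the variables in `d`. -/
def IsValSubst (σ : Subst) (d : Finset Var) : Prop :=
  (∀ x, x ∈ d ↔ (σ x).isSome) ∧ (∀ x e, σ x = some e → ∃ v : Val, e = .lit v)

def Expr.subst (σ : Subst) : Expr → Expr
  | .lit v => .lit v
  | .var x => (σ x).getD (.var x)
  | .add e₁ e₂ => .add (e₁.subst σ) (e₂.subst σ)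
  | .eq e₁ e₂ => .eq (e₁.subst σ) (e₂.subst σ)
  | .and e₁ e₂ => .and (e₁.subst σ) (e₂.subst σ)
  | .not e => .not (e.subst σ)

/-! ## Spatial formulae and assertions -/

/-- Spatial formulae; predicate instances carry an optional level tag
    (`none` means the tag has been erased). -/
inductive Spatial : Type
  | emp : Spatial
  | pts : Expr → ℕ → Expr → Spatial   -- ⟨e₁, ι⟩ ↦ e₂
  | blk : Expr → ℕ → Spatial           -- [e, m]
  | pred : String → Option ℕ → List Expr → Spatial  -- p^ℓ(ē)
  | star : Spatial → Spatial → Spatial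
  deriving DecidableEq

def Spatial.vars : Spatial → Finset Var
  | .emp => ∅
  | .pts e₁ _ e₂ => e₁.vars ∪ e₂.vars
  | .blk e _ => e.vars
  | .pred _ _ args => args.foldr (fun e acc => e.vars ∪ acc) ∅
  | .star P Q => P.vars ∪ Q.vars

def Spatial.subst (σ : Subst) : Spatial → Spatial
  | .emp => .emp
  | .pts e₁ ι e₂ => .pts (e₁.subst σ) ι (e₂.subst σ)
  | .blk e m => .blk (e.subst σ) m
  | .pred p t args => .pred p t (args.map (Expr.subst σ))
  | .star P Q => .star (P.subst σ) (Q.subst σ)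

def Spatial.setTags (t : Option ℕ) : Spatial → Spatial
  | .pred p _ args => .pred p t args
  | .star P Q => .star (P.setTags t) (Q.setTags t)
  | s => s

/-- ⌊P⌋: erase all level tags. -/
def Spatial.eraseTags (s : Spatial) : Spatial := s.setTags none

/-- P mentions no level tags. -/
def Spatial.TagFree (s : Spatial) : Prop := s.eraseTags = s

def Spatial.hasPred : Spatial → Prop
  | .pred _ _ _ => True
  | .star P Q => P.hasPred ∨ Q.hasPred
  | _ => False

def Spatial.hasPts : Spatial → Prop
  | .pts _ _ _ => True
  | .star P Q => P.hasPts ∨ Q.hasPts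
  | _ => False

/-- Assertions {φ; P}: a pure part and a spatial part. -/
structure Assn where
  pure : Expr
  spat : Spatial

def Assn.vars (A : Assn) : Finset Var := A.pure.vars ∪ A.spat.vars
def Assn.subst (A : Assn) (σ : Subst) : Assn := ⟨A.pure.subst σ, A.spat.subst σ⟩
def Assn.eraseTags (A : Assn) : Assn := ⟨A.pure, A.spat.eraseTags⟩

/-- Ghosts: GV(Γ, P, Q) = Vars(P) ∖ Γ. -/
def GV (Γ : Finset Var) (P _Q : Assn) : Finset Var := P.vars \ Γ
/-- Existentials: EV(Γ, P, Q) = Vars(Q) ∖ (Γ ∪ Vars(P)). -/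
def EV (Γ : Finset Var) (P Q : Assn) : Finset Var := Q.vars \ (Γ ∪ P.vars)

/-! ## Satisfaction -/

/-- Interpretations of inductive heap predicates. -/
abbrev Interp := String → Heap → List Val → Prop

def evalList (es : List Expr) (s : Store) : Option (List Val) := es.mapM (Expr.eval · s)

/-- Satisfaction of a spatial formula. Blocks have no spatial footprint;
    points-to heaplets are singleton heaps at a non-null base address. -/
def SatS (I : Interp) : Heap → Store → Spatial → Prop
  | h, _, .emp => h = ∅
  | h, s, .pts e₁ ι e₂ =>
      ∃ (l : Loc) (v : Val), 0 < l ∧ e₁.eval s = some (l : Val) ∧ e₂.eval s = some v ∧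
        h = Finmap.singleton (l + ι) v
  | h, _, .blk _ _ => h = ∅
  | h, s, .pred p _ args => ∃ vs, evalList args s = some vs ∧ I p h vs
  | h, s, .star P Q => ∃ h₁ h₂, h₁.Disjoint h₂ ∧ h = h₁ ∪ h₂ ∧ SatS I h₁ s P ∧ SatS I h₂ s Q

/-- Satisfaction ⟨h, s⟩ ⊨ {φ; P}. -/
def Sat (I : Interp) (h : Heap) (s : Store) (A : Assn) : Prop :=
  A.pure.holds s ∧ SatS I h s A.spat

/-! ## Programs and small-step operational semantics -/

inductive Cmd : Type
  | read : Var → Var → ℕ → Cmd       -- let y = *(x + ι)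
  | write : Var → ℕ → Expr → Cmd     -- *(x + ι) := e
  | skip : Cmd
  | error : Cmd
  | ite : Expr → Cmd → Cmd → Cmd
  | call : String → List Expr → Cmd
  | seq : Cmd → Cmd → Cmd
  | malloc : Var → ℕ → Cmd           -- let y = malloc(m)
  | free : Var → ℕ → Cmd             -- free(x), block of m cells
  deriving DecidableEq

structure FunDef where
  name : String
  params : List Var
  body : Cmd

abbrev FunDict := List FunDef

def FunDict.find (Δ : FunDict) (f : String) : Option FunDef := Δ.find? (fun fd => fd.name == f)

def bindStore (xs : List Var) (vs : List Val) : Store :=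
  (xs.zip vs).foldr (fun p acc => acc.insert p.1 p.2) ∅

abbrev Frame := Cmd × Store
abbrev Config := Heap × List Frame

def allocCells (l : Loc) : List Val → Heap → Heap
  | [], h => h
  | v :: vs, h => (allocCells (l + 1) vs h).insert l v

def freeCells (l : Loc) : ℕ → Heap → Heap
  | 0, h => h
  | m + 1, h => (freeCells (l + 1) m h).erase l

/-- Local (single-frame, non-call) steps of atomic commands. -/
inductive HStep : Heap → Cmd → Store → Heap → Cmd → Store → Prop
  | read {h s y x ι} {l : Loc} {v : Val} :
      s.lookup x = some (l : Val) → h.lookup (l + ι) = some v →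
      HStep h (.read y x ι) s h .skip (s.insert y v)
  | write {h s x ι e} {l : Loc} {v v' : Val} :
      s.lookup x = some (l : Val) → h.lookup (l + ι) = some v' → e.eval s = some v →
      HStep h (.write x ι e) s (h.insert (l + ι) v) .skip s
  | malloc {h s y m} {l : Loc} {vs : List Val} :
      0 < l → vs.length = m → (∀ i < m, (l + i) ∉ h) →
      HStep h (.malloc y m) s (allocCells l vs h) .skip (s.insert y (l : Val))
  | free {h s x m} {l : Loc} :
      s.lookup x = some (l : Val) → (∀ i < m, (l + i) ∈ h) →
      HStep h (.free x m) s (freeCells l m h) .skip s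
  | iteTrue {h s e c₁ c₂} : e.holds s → HStep h (.ite e c₁ c₂) s h c₁ s
  | iteFalse {h s e c₁ c₂} {v : Val} : e.eval s = some v → v ≠ 1 →
      HStep h (.ite e c₁ c₂) s h c₂ s

/-- Small-step operational semantics on configurations (heap + stack of frames). -/
inductive Step (Δ : FunDict) : Config → Config → Prop
  | head {h c s h' c' s' S} : HStep h c s h' c' s' →
      Step Δ (h, (c, s) :: S) (h', (c', s') :: S)
  | seqStep {h c₁ s h' c₁' s' c₂ S} : Step Δ (h, (c₁, s) :: S) (h', (c₁', s') :: S) →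
      Step Δ (h, (.seq c₁ c₂, s) :: S) (h', (.seq c₁' c₂, s') :: S)
  | seqSkip {h c s S} : Step Δ (h, (.seq .skip c, s) :: S) (h, (c, s) :: S)
  | call {h s S f args vs fd} : Δ.find f = some fd → evalList args s = some vs →
      Step Δ (h, (.call f args, s) :: S)
             (h, (fd.body, bindStore fd.params vs) :: (.skip, s) :: S)
  | callSeq {h s S f args vs fd c₂} : Δ.find f = some fd → evalList args s = some vs →
      Step Δ (h, (.seq (.call f args) c₂, s) :: S)
             (h, (fd.body, bindStore fd.params vs) :: (c₂, s) :: S)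
  | ret {h s' c s S} : Step Δ (h, (.skip, s') :: (c, s) :: S) (h, (c, s) :: S)

/-- Δ ⊢ cfg ⇝* cfg' -/
def Steps (Δ : FunDict) : Config → Config → Prop := Relation.ReflTransGen (Step Δ)

/-- |h| -/
def heapSize (h : Heap) : ℕ := h.keys.card

/-- Every execution trace from `cfg` is finite. -/
def Terminates (Δ : FunDict) (cfg : Config) : Prop :=
  ¬ ∃ ρ : ℕ → Config, ρ 0 = cfg ∧ ∀ i, Step Δ (ρ i) (ρ (i + 1))

/-! ## Sized validity -/

/-- Sized validity: Σ; Γ; {P} c {Q} is n-valid w.r.t. Δ. -/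
def Valid (I : Interp) (Δ : FunDict) (Γ : Finset Var) (P : Assn) (c : Cmd) (Q : Assn)
    (n : ℕ) : Prop :=
  ∀ (h h' : Heap) (s s' : Store),
    heapSize h ≤ n →
    Steps Δ (h, [(c, s)]) (h', [(.skip, s')]) →
    s.keys = Γ →
    ∀ σgv : Subst, IsValSubst σgv (GV Γ P Q) → Sat I h s (P.subst σgv) →
      ∃ σev : Subst, IsValSubst σev (EV Γ P Q) ∧ Sat I h' s' (Q.subst (σev.union σgv))

/-! ## Contexts: inductive predicates and function specifications -/

structure PredClause where
  guard : Expr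
  pure : Expr
  spat : Spatial

structure PredDef where
  name : String
  params : List Var
  clauses : List PredClause

/-- A well-founded inductive predicate: every clause containing a recursive
    predicate instance also contains at least one points-to heaplet. -/
def PredDef.WF (D : PredDef) : Prop :=
  ∀ cl ∈ D.clauses, cl.spat.hasPred → cl.spat.hasPts

structure FunSpec where
  name : String
  params : List Var
  pre : Assn
  post : Assn

structure Ctx where
  preds : List PredDef
  funs : List FunSpec

/-- The guard of a clause, instantiated by σ, is true (under every store). -/
def ClauseGuardTrue (σ : Subst) (cl : PredClause) : Prop :=
  ∀ s : Store, (cl.guard.subst σ).holds s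

/-- The body of a clause, instantiated by σ, is satisfied by `h` under some
    valuation (store) of the clause's free variables. -/
def ClauseBodySat (I : Interp) (σ : Subst) (cl : PredClause) (h : Heap) : Prop :=
  ∃ s : Store, Sat I h s ⟨cl.pure.subst σ, cl.spat.subst σ⟩

/-- Substitution of the given values for the formal parameters of `D`. -/
def valSubstOf (D : PredDef) (vs : List Val) : Subst :=
  Subst.ofList (D.params.zip (vs.map Expr.lit))

/-- `I` interprets `D` by selecting the *first* clause whose guard holds. -/
def UnfoldsFirst (I : Interp) (D : PredDef) : Prop :=
  ∀ (h : Heap) (vs : List Val),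
    I D.name h vs ↔
      (vs.length = D.params.length ∧
       ∃ j : Fin D.clauses.length,
         (∀ i : Fin D.clauses.length, (i : ℕ) < (j : ℕ) →
            ¬ ClauseGuardTrue (valSubstOf D vs) (D.clauses.get i)) ∧
         ClauseGuardTrue (valSubstOf D vs) (D.clauses.get j) ∧
         ClauseBodySat I (valSubstOf D vs) (D.clauses.get j) h)

/-- `I` interprets `D` via *some* clause whose guard holds. -/
def UnfoldsSome (I : Interp) (D : PredDef) : Prop :=
  ∀ (h : Heap) (vs : List Val),
    I D.name h vs ↔
      (vs.length = D.params.length ∧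
       ∃ j : Fin D.clauses.length,
         ClauseGuardTrue (valSubstOf D vs) (D.clauses.get j) ∧
         ClauseBodySat I (valSubstOf D vs) (D.clauses.get j) h)

/-! ## Coherence of a function dictionary with a list of function specifications -/

inductive Coherent (I : Interp) (n : ℕ) : FunDict → List FunSpec → Prop
  | nil : Coherent I n [] []
  | aux {Δ Φ fd fs} : Coherent I n Δ Φ →
      fd.name = fs.name → fd.params = fs.params →
      Valid I Δ fs.params.toFinset fs.pre fd.body fs.post n →
      Coherent I n (fd :: Δ) (fs :: Φ)
  | recC {Δ Φ fd fs} {φ : Expr} {P' : Spatial} {p : String} {es : List Expr} :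
      Coherent I n Δ Φ →
      fd.name = fs.name → fd.params = fs.params →
      fs.pre = ⟨φ, .star P' (.pred p (some 1) es)⟩ →
      P'.TagFree → fs.post.spat.TagFree →
      (∀ n' < n, Valid I (fd :: Δ) fs.params.toFinset fs.pre fd.body fs.post n') →
      Coherent I n (fd :: Δ) (fs :: Φ)

/-- `fd`/`fs` occur in Δ/Φ as an auxiliary function covered by clause (b)
    of the coherence definition. -/
def AuxCovered (I : Interp) (n : ℕ) (Δ : FunDict) (Φ : List FunSpec)
    (fd : FunDef) (fs : FunSpec) : Prop :=
  ∃ Δ₁ Δ₂ Φ₁ Φ₂, Δ = Δ₁ ++ fd :: Δ₂ ∧ Φ = Φ₁ ++ fs :: Φ₂ ∧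
    fd.name = fs.name ∧ fd.params = fs.params ∧
    Valid I Δ₂ fs.params.toFinset fs.pre fd.body fs.post n

/-- `fd`/`fs` occur in Δ/Φ as the recursive function covered by clause (c)
    of the coherence definition. -/
def RecCovered (I : Interp) (n : ℕ) (Δ : FunDict) (Φ : List FunSpec)
    (fd : FunDef) (fs : FunSpec) : Prop :=
  ∃ (Δ₂ : FunDict) (Φ₂ : List FunSpec) (φ : Expr) (P' : Spatial) (p : String) (es : List Expr),
    Δ = fd :: Δ₂ ∧ Φ = fs :: Φ₂ ∧
    fd.name = fs.name ∧ fd.params = fs.params ∧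
    fs.pre = ⟨φ, .star P' (.pred p (some 1) es)⟩ ∧ P'.TagFree ∧ fs.post.spat.TagFree ∧
    (∀ n' < n, Valid I Δ fs.params.toFinset fs.pre fd.body fs.post n')

/-! ## The SSL transforming-entailment judgment -/

/-- ⊛_{0 ≤ i < |es|} ⟨x, i⟩ ↦ esᵢ -/
def ptsRange (x : Var) (es : List Expr) : Spatial :=
  (es.zipIdx).foldr (fun p acc => .star (.pts (.var x) p.2 p.1) acc) .emp

/-- Nested conditional: if (g₁) {c₁} else {if (g₂) {c₂} … else {c_N}}. -/
def iteChain : List Expr → List Cmd → Cmd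
  | _, [] => .skip
  | _, [c] => c
  | g :: gs, c :: cs => .ite g c (iteChain gs cs)
  | [], c :: _ => c

/-- The SSL judgment Σ; Γ ⊢ {P} ⇝ {Q} | c, inductively generated by the SSL
    rules (Emp, Inconsistency, SubstLeft, NullNotLVal, StarPartial, Read, Write,
    Frame, Alloc, Free, Open, Close, Call, AbduceCall, UnifyHeaps, UnifyPure,
    Pick, SubstRight). -/
inductive Deriv (maxUnfold : ℕ) : Ctx → Finset Var → Assn → Assn → Cmd → Prop
  | emp {Sg : Ctx} {Γ : Finset Var} {φ ψ : Expr} :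
      EV Γ ⟨φ, .emp⟩ ⟨ψ, .emp⟩ = ∅ → PImplies φ ψ →
      Deriv maxUnfold Sg Γ ⟨φ, .emp⟩ ⟨ψ, .emp⟩ .skip
  | inconsistency {Sg Γ} {φ : Expr} {P : Spatial} {Q : Assn} :
      (∀ s : Store, ¬ φ.holds s) →
      Deriv maxUnfold Sg Γ ⟨φ, P⟩ Q .error
  | substLeft {Sg Γ} {φ : Expr} {P : Spatial} {Q : Assn} {c x y} :
      PImplies φ (.eq (.var x) (.var y)) →
      Deriv maxUnfold Sg Γ (Assn.subst ⟨φ, P⟩ (Subst.single x (.var y)))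
        (Q.subst (Subst.single x (.var y))) c →
      Deriv maxUnfold Sg Γ ⟨φ, P⟩ Q c
  | nullNotLVal {Sg Γ} {φ : Expr} {P : Spatial} {Q : Assn} {c x ι} {e : Expr} :
      Deriv maxUnfold Sg Γ
        ⟨.and φ (.not (.eq (.var x) (.lit 0))), .star (.pts (.var x) ι e) P⟩ Q c →
      Deriv maxUnfold Sg Γ ⟨φ, .star (.pts (.var x) ι e) P⟩ Q c
  | starPartial {Sg Γ} {φ : Expr} {P : Spatial} {Q : Assn} {c x y} {ι ι' : ℕ} {e e' : Expr} :
      Deriv maxUnfold Sg Γ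
        ⟨.and φ (.not (.eq (.add (.var x) (.lit (ι : Val))) (.add (.var y) (.lit (ι' : Val))))),
         .star (.pts (.var x) ι e) (.star (.pts (.var y) ι' e') P)⟩ Q c →
      Deriv maxUnfold Sg Γ ⟨φ, .star (.pts (.var x) ι e) (.star (.pts (.var y) ι' e') P)⟩ Q c
  | read {Sg Γ} {φ : Expr} {P : Spatial} {Q : Assn} {c} {x a y : Var} {ι : ℕ} :
      a ∈ GV Γ ⟨φ, .star (.pts (.var x) ι (.var a)) P⟩ Q →
      y ∉ Γ → y ∉ Assn.vars ⟨φ, .star (.pts (.var x) ι (.var a)) P⟩ → y ∉ Q.vars →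
      Deriv maxUnfold Sg (insert y Γ)
        (Assn.subst ⟨φ, .star (.pts (.var x) ι (.var a)) P⟩ (Subst.single a (.var y)))
        (Q.subst (Subst.single a (.var y))) c →
      Deriv maxUnfold Sg Γ ⟨φ, .star (.pts (.var x) ι (.var a)) P⟩ Q (.seq (.read y x ι) c)
  | write {Sg Γ} {φ ψ : Expr} {P Q : Spatial} {c} {x : Var} {ι : ℕ} {e e' : Expr} :
      e.vars ⊆ Γ →
      Deriv maxUnfold Sg Γ ⟨φ, .star (.pts (.var x) ι e) P⟩ ⟨ψ, .star (.pts (.var x) ι e) Q⟩ c →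
      Deriv maxUnfold Sg Γ ⟨φ, .star (.pts (.var x) ι e') P⟩ ⟨ψ, .star (.pts (.var x) ι e) Q⟩
        (.seq (.write x ι e) c)
  | frame {Sg Γ} {φ ψ : Expr} {P Q R R' : Spatial} {c} :
      EV Γ ⟨φ, P⟩ ⟨ψ, Q⟩ ∩ R.vars = ∅ →
      R.eraseTags = R'.eraseTags →
      Deriv maxUnfold Sg Γ ⟨φ, P⟩ ⟨ψ, Q⟩ c →
      Deriv maxUnfold Sg Γ ⟨φ, .star P R⟩ ⟨ψ, .star Q R'⟩ c
  | unifyHeaps {Sg Γ} {φ ψ : Expr} {P Q R R' : Spatial} {c} {σ : Subst} :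
      (R'.subst σ).eraseTags = R.eraseTags →
      σ.domain ≠ ∅ → σ.domain ⊆ ↑(EV Γ ⟨φ, .star P R⟩ ⟨ψ, .star Q R'⟩) →
      Deriv maxUnfold Sg Γ ⟨φ, .star P R⟩ (Assn.subst ⟨ψ, .star Q R'⟩ σ) c →
      Deriv maxUnfold Sg Γ ⟨φ, .star P R⟩ ⟨ψ, .star Q R'⟩ c
  | pick {Sg Γ} {φ ψ : Expr} {P Q : Spatial} {c} {y : Var} {e : Expr} :
      y ∈ EV Γ ⟨φ, P⟩ ⟨ψ, Q⟩ →
      e.vars ⊆ Γ ∪ GV Γ ⟨φ, P⟩ ⟨ψ, Q⟩ →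
      Deriv maxUnfold Sg Γ ⟨φ, P⟩ (Assn.subst ⟨ψ, Q⟩ (Subst.single y e)) c →
      Deriv maxUnfold Sg Γ ⟨φ, P⟩ ⟨ψ, Q⟩ c
  | unifyPure {Sg Γ} {φ φ' ψ ψ' : Expr} {P Q : Spatial} {c} {σ : Subst} :
      ψ'.subst σ = φ' →
      σ.domain ≠ ∅ → σ.domain ⊆ ↑(EV Γ ⟨.and φ φ', P⟩ ⟨.and ψ ψ', Q⟩) →
      Deriv maxUnfold Sg Γ ⟨.and φ φ', P⟩ (Assn.subst ⟨.and ψ ψ', Q⟩ σ) c →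
      Deriv maxUnfold Sg Γ ⟨.and φ φ', P⟩ ⟨.and ψ ψ', Q⟩ c
  | substRight {Sg Γ} {P : Assn} {ψ : Expr} {Q : Spatial} {c} {x : Var} {e : Expr} :
      x ∈ EV Γ P ⟨.and ψ (.eq (.var x) e), Q⟩ →
      Deriv maxUnfold Sg Γ P (Assn.subst ⟨ψ, Q⟩ (Subst.single x e)) c →
      Deriv maxUnfold Sg Γ P ⟨.and ψ (.eq (.var x) e), Q⟩ c
  | alloc {Sg Γ} {φ ψ : Expr} {P Q R R' : Spatial} {z y : Var} {m : ℕ}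
      {es : List Expr} {ts : List Var} {c} :
      R = .star (.blk (.var z) m) (ptsRange z es) → es.length = m →
      z ∈ EV Γ ⟨φ, P⟩ ⟨ψ, .star Q R⟩ →
      ts.length = m →
      (∀ w ∈ y :: ts, w ∉ Γ ∧ w ∉ Assn.vars ⟨φ, P⟩ ∧ w ∉ Assn.vars ⟨ψ, .star Q R⟩) →
      R' = .star (.blk (.var y) m) (ptsRange y (ts.map .var)) →
      Deriv maxUnfold Sg (insert y Γ) ⟨φ, .star P R'⟩ ⟨ψ, .star Q R⟩ c →
      Deriv maxUnfold Sg Γ ⟨φ, P⟩ ⟨ψ, .star Q R⟩ (.seq (.malloc y m) c)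
  | free {Sg Γ} {φ : Expr} {P : Spatial} {Q : Assn} {R : Spatial} {x : Var} {m : ℕ}
      {es : List Expr} {c} :
      R = .star (.blk (.var x) m) (ptsRange x es) → es.length = m →
      x ∈ Γ → (∀ e ∈ es, Expr.vars e ⊆ Γ) →
      Deriv maxUnfold Sg Γ ⟨φ, P⟩ Q c →
      Deriv maxUnfold Sg Γ ⟨φ, .star P R⟩ Q (.seq (.free x m) c)
  | openR {Sg : Ctx} {Γ} {φ : Expr} {P : Spatial} {Q : Assn} {p : String}
      {args : List Expr} {ℓ : ℕ} {D : PredDef} {σ : Subst} {cs : List Cmd} :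
      D ∈ Sg.preds → D.name = p →
      (∀ a ∈ args, Expr.vars a ⊆ Γ) →
      D.params.length = args.length →
      ℓ < maxUnfold →
      σ = Subst.ofList (D.params.zip args) →
      cs.length = D.clauses.length →
      (∀ (j : ℕ) (hj : j < D.clauses.length) (hj' : j < cs.length),
        Deriv maxUnfold Sg Γ
          ⟨.and φ (.and ((D.clauses[j]'hj).guard.subst σ) ((D.clauses[j]'hj).pure.subst σ)),
           .star (((D.clauses[j]'hj).spat.subst σ).setTags (some (ℓ + 1))) P.eraseTags⟩
          Q (cs[j]'hj')) →
      Deriv maxUnfold Sg Γ ⟨φ, .star P (.pred p (some ℓ) args)⟩ Q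
        (iteChain (D.clauses.map (fun cl => cl.guard.subst σ)) cs)
  | close {Sg : Ctx} {Γ} {P : Assn} {ψ : Expr} {Q : Spatial} {p : String}
      {args : List Expr} {ℓ : ℕ} {D : PredDef} {σ : Subst} {k : ℕ} {c}
      (hk : k < D.clauses.length) :
      D ∈ Sg.preds → D.name = p →
      D.params.length = args.length →
      ℓ < maxUnfold →
      σ = Subst.ofList (D.params.zip args) →
      Deriv maxUnfold Sg Γ P
        ⟨.and ψ (.and ((D.clauses[k]'hk).guard.subst σ) ((D.clauses[k]'hk).pure.subst σ)),
         .star Q (((D.clauses[k]'hk).spat.subst σ).setTags (some (ℓ + 1)))⟩ c →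
      Deriv maxUnfold Sg Γ P ⟨ψ, .star Q (.pred p (some ℓ) args)⟩ c
  | callR {Sg : Ctx} {Γ} {φ : Expr} {P R : Spatial} {Q : Assn} {fs : FunSpec}
      {σ : Subst} {es : List Expr} {c} :
      fs ∈ Sg.funs →
      R = fs.pre.spat.subst σ →
      PImplies φ (fs.pre.pure.subst σ) →
      es = fs.params.map (fun x => (σ x).getD (.var x)) →
      (∀ e ∈ es, Expr.vars e ⊆ Γ) →
      Deriv maxUnfold Sg Γ
        ⟨.and φ (fs.post.pure.subst σ), .star P ((fs.post.spat.subst σ).eraseTags)⟩ Q c →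
      Deriv maxUnfold Sg Γ ⟨φ, .star P R⟩ Q (.seq (.call fs.name es) c)
  | abduceCall {Sg : Ctx} {Γ} {φ : Expr} {P R : Spatial} {Q : Assn} {fs : FunSpec}
      {σ : Subst} {Pf Ff Fh F' : Spatial} {c₁ c₂} :
      fs ∈ Sg.funs →
      fs.pre.spat = .star Pf Ff →
      ¬ Ff.hasPred → Ff ≠ .emp →
      P = Pf.subst σ → F' = Ff.subst σ →
      Deriv maxUnfold Sg Γ ⟨φ, Fh⟩ ⟨φ, F'⟩ c₁ →
      Deriv maxUnfold Sg Γ ⟨φ, .star P (.star F' R)⟩ Q c₂ →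
      Deriv maxUnfold Sg Γ ⟨φ, .star P (.star Fh R)⟩ Q (.seq c₁ c₂)

/-- The top-level SSL judgment for a goal named `f` with formal parameters `xs`:
    either the rule Induction is applied first (adding the recursive hypothesis
    to the context), or the derivation proceeds with the remaining rules. -/
inductive DerivTop (maxUnfold : ℕ) : Ctx → String → List Var → Assn → Assn → Cmd → Prop
  | induction {Sg : Ctx} {f : String} {xs : List Var} {φ : Expr} {p : String}
      {args : List Expr} {P : Spatial} {Q : Assn} {c} :
      Deriv maxUnfold
        ⟨Sg.preds,
         ⟨f, xs, ⟨φ, .star (.pred p (some 1) args) P.eraseTags⟩, Q.eraseTags⟩ :: Sg.funs⟩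
        xs.toFinset ⟨φ, .star (.pred p (some 0) args) P⟩ Q c →
      DerivTop maxUnfold Sg f xs ⟨φ, .star (.pred p (some 0) args) P⟩ Q c
  | plain {Sg : Ctx} {f : String} {xs : List Var} {P Q : Assn} {c} :
      Deriv maxUnfold Sg xs.toFinset P Q c →
      DerivTop maxUnfold Sg f xs P Q c


/-! ### Auxiliary lemmas for the soundness of Free -/

private lemma ptsFold_subst (σ : Subst) (x : Var) (hσx : σ x = none) :
    ∀ ps : List (ℕ × Expr),
      (ps.foldr (fun p acc => Spatial.star (.pts (.var x) p.1 p.2) acc) .emp).subst σ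
      = (ps.map (fun p => (p.1, p.2.subst σ))).foldr
          (fun p acc => Spatial.star (.pts (.var x) p.1 p.2) acc) .emp
  | [] => rfl
  | p :: ps => by
      simp only [List.foldr_cons, List.map_cons, Spatial.subst, Expr.subst, hσx,
        Option.getD_none, ptsFold_subst σ x hσx ps]

private lemma ptsFold_mem (I : Interp) (s : Store) (x : Var) (L : Loc)
    (hx : s.lookup x = some ((L : ℕ) : Val)) :
    ∀ (ps : List (ℕ × Expr)) (h : Heap),
      SatS I h s (ps.foldr (fun p acc => Spatial.star (.pts (.var x) p.1 p.2) acc) .emp) →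
      ∀ key, key ∈ h ↔ ∃ p ∈ ps, key = L + p.1 := by
  intro ps
  induction ps with
  | nil =>
      intro h hsat key
      simp only [List.foldr_nil, SatS] at hsat
      subst hsat; simp [Finmap.notMem_empty]
  | cons p ps ih =>
      intro h hsat key
      obtain ⟨h₁, h₂, _, rfl, hp, hrest⟩ := hsat
      obtain ⟨l, v, _, heval, _, rfl⟩ := hp
      have hlL : l = L := by
        have : Expr.eval (.var x) s = some ((L : ℕ) : Val) := hx
        rw [heval] at this
        exact_mod_cast (Option.some.injEq _ _ ▸ this)
      subst hlL
      rw [Finmap.mem_union, Finmap.mem_singleton, ih h₂ hrest key]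
      constructor
      · rintro (rfl | ⟨q, hq, rfl⟩)
        · exact ⟨p, List.mem_cons_self, rfl⟩
        · exact ⟨q, List.mem_cons_of_mem _ hq, rfl⟩
      · rintro ⟨q, hq, rfl⟩
        rcases List.mem_cons.1 hq with rfl | hq
        · exact Or.inl rfl
        · exact Or.inr ⟨q, hq, rfl⟩

private lemma lookup_freeCells :
    ∀ (m l : ℕ) (h : Heap) (key : ℕ),
      (freeCells l m h).lookup key
        = if ∃ i, i < m ∧ key = l + i then none else h.lookup key := by
  intro m
  induction m with
  | zero => intro l h key; simp [freeCells]
  | succ m ih =>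
      intro l h key
      show ((freeCells (l + 1) m h).erase l).lookup key = _
      by_cases hk : key = l
      · subst hk
        have hc : ∃ i, i < m + 1 ∧ key = key + i := ⟨0, Nat.succ_pos m, rfl⟩
        rw [Finmap.lookup_erase, if_pos hc]
      · rw [Finmap.lookup_erase_ne hk, ih]
        by_cases h1 : ∃ i, i < m ∧ key = (l + 1) + i
        · obtain ⟨i, hi, rfl⟩ := h1
          have hc1 : ∃ j, j < m ∧ l + 1 + i = (l + 1) + j := ⟨i, hi, rfl⟩
          have hc2 : ∃ j, j < m + 1 ∧ l + 1 + i = l + j := ⟨i + 1, by omega, by omega⟩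
          rw [if_pos hc1, if_pos hc2]
        · rw [if_neg h1, if_neg]
          rintro ⟨i, hi, rfl⟩
          cases i with
          | zero => exact hk (by omega)
          | succ j => exact h1 ⟨j, by omega, by omega⟩

private lemma ptsFold_vars_subset (x : Var) (Γ : Finset Var) (hx : x ∈ Γ) :
    ∀ ps : List (ℕ × Expr), (∀ p ∈ ps, (p.2).vars ⊆ Γ) →
      (ps.foldr (fun p acc => Spatial.star (.pts (.var x) p.1 p.2) acc) .emp).vars ⊆ Γ := by
  intro ps
  induction ps with
  | nil => intro _; simp [Spatial.vars]
  | cons p ps ih =>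
      intro hsub
      simp only [List.foldr_cons, Spatial.vars, Expr.vars]
      refine Finset.union_subset (Finset.union_subset ?_ ?_) ?_
      · simpa using hx
      · exact hsub p List.mem_cons_self
      · exact ih (fun q hq => hsub q (List.mem_cons_of_mem _ hq))

private lemma ptsRange_eq (x : Var) (es : List Expr) :
    ptsRange x es = (es.zipIdx.map Prod.swap).foldr
      (fun p acc => Spatial.star (.pts (.var x) p.1 p.2) acc) .emp := by
  simp [ptsRange, List.foldr_map]

/-- **Soundness of the Free rule**. -/
theorem free_sound
    (I : Interp) (n : ℕ) (Δ : FunDict) (Sg : Ctx) (Γ : Finset Var)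
    (φ : Expr) (P : Spatial) (Q : Assn) (R : Spatial) (x : Var) (m : ℕ)
    (es : List Expr) (c : Cmd)
    (hR : R = .star (.blk (.var x) m) (ptsRange x es)) (hlen : es.length = m)
    (hx : x ∈ Γ) (hes : ∀ e ∈ es, Expr.vars e ⊆ Γ)
    (hprem : Valid I Δ Γ ⟨φ, P⟩ c Q n) :
    Valid I Δ Γ ⟨φ, .star P R⟩ (.seq (.free x m) c) Q n := by
  subst hR
  -- the variables of R are contained in Γ
  have hesE : ∀ p ∈ es.zipIdx.map Prod.swap, (p.2 : Expr).vars ⊆ Γ := by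
    intro p hp
    exact hes p.2 (by
      obtain ⟨q, hq, rfl⟩ := List.mem_map.1 hp
      have := List.mem_map_of_mem (f := Prod.fst) hq
      rwa [List.zipIdx_map_fst] at this)
  have hRvars : (Spatial.star (.blk (.var x) m) (ptsRange x es)).vars ⊆ Γ := by
    simp only [Spatial.vars, Expr.vars]
    refine Finset.union_subset (by simpa using hx) ?_
    rw [ptsRange_eq]
    exact ptsFold_vars_subset x Γ hx (es.zipIdx.map Prod.swap) hesE
  -- GV and EV coincide for the two specs
  have hGV : GV Γ ⟨φ, .star P (.star (.blk (.var x) m) (ptsRange x es))⟩ Q = GV Γ ⟨φ, P⟩ Q := by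
    ext a
    simp only [GV, Assn.vars, Spatial.vars, Finset.mem_sdiff, Finset.mem_union]
    have hr := @hRvars a
    simp only [Spatial.vars, Finset.mem_union] at hr
    constructor
    · rintro ⟨h1 | h2 | h3, hng⟩
      · exact ⟨Or.inl h1, hng⟩
      · exact ⟨Or.inr h2, hng⟩
      · exact absurd (hr h3) hng
    · rintro ⟨h1 | h2, hng⟩
      · exact ⟨Or.inl h1, hng⟩
      · exact ⟨Or.inr (Or.inl h2), hng⟩
  have hEV : EV Γ ⟨φ, .star P (.star (.blk (.var x) m) (ptsRange x es))⟩ Q = EV Γ ⟨φ, P⟩ Q := by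
    ext a
    simp only [EV, Assn.vars, Spatial.vars, Finset.mem_sdiff, Finset.mem_union]
    have hr := @hRvars a
    simp only [Spatial.vars, Finset.mem_union] at hr
    constructor
    · rintro ⟨hq, hng⟩
      exact ⟨hq, fun hc => hng (by tauto)⟩
    · rintro ⟨hq, hng⟩
      refine ⟨hq, fun hc => ?_⟩
      rcases hc with hc | hc | hc | hc
      · exact hng (Or.inl hc)
      · exact hng (Or.inr (Or.inl hc))
      · exact hng (Or.inr (Or.inr hc))
      · exact hng (Or.inl (hr hc))
  intro h h' s s' hsize hsteps hkeys σgv hσgv hsat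
  -- σgv does not touch x
  have hσx : σgv x = none := by
    have hxgv : x ∉ GV Γ ⟨φ, .star P (.star (.blk (.var x) m) (ptsRange x es))⟩ Q := by
      simp [GV, Finset.mem_sdiff, hx]
    have := (hσgv.1 x)
    cases hz : σgv x with
    | none => rfl
    | some e => exact absurd (this.2 (by simp [hz])) hxgv
  -- decompose satisfaction
  obtain ⟨hpure, hspat⟩ := hsat
  simp only [Assn.subst, Spatial.subst, SatS, Expr.subst, hσx, Option.getD_none] at hspat
  obtain ⟨h₁, h₂, hdisj, rfl, hP1, hb, hr, _, rfl, hblk, hpts⟩ := hspat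
  subst hblk
  rw [Finmap.empty_union] at hdisj hsteps hsize
  -- invert the execution: first step is the free
  rcases hsteps.cases_head with heq | ⟨cfg1, hstep1, hsteps1⟩
  · simp at heq
  cases hstep1 with
  | head hh => cases hh
  | seqStep hinner =>
    cases hinner with
    | head hh =>
      cases hh with
      | free hlx hmem =>
        rename_i l
        -- second step: seqSkip
        rcases hsteps1.cases_head with heq | ⟨cfg2, hstep2, hsteps2⟩
        · simp at heq
        cases hstep2 with
        | head hh2 => cases hh2
        | seqStep hinner2 =>
          cases hinner2 with
          | head hh3 => cases hh3
        | seqSkip =>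
          -- characterize the domain of hr
          have hptsF := hpts
          rw [ptsRange_eq] at hptsF
          rw [ptsFold_subst σgv x hσx (es.zipIdx.map Prod.swap)] at hptsF
          have hmemr := ptsFold_mem I s x l hlx _ hr hptsF
          have hmemr' : ∀ key, key ∈ hr ↔ ∃ i, i < m ∧ key = l + i := by
            intro key
            rw [hmemr key]
            constructor
            · rintro ⟨p, hp, rfl⟩
              obtain ⟨q, hq, rfl⟩ := List.mem_map.1 hp
              refine ⟨q.1, ?_, rfl⟩
              have : q.1 ∈ (es.zipIdx.map Prod.swap).map Prod.fst := List.mem_map_of_mem hq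
              rw [List.map_map, show (Prod.fst ∘ Prod.swap : Expr × ℕ → ℕ) = Prod.snd from rfl,
                List.zipIdx_map_snd, List.mem_range'_1, hlen] at this
              omega
            · rintro ⟨i, hi, rfl⟩
              have : i ∈ (es.zipIdx.map Prod.swap).map Prod.fst := by
                rw [List.map_map, show (Prod.fst ∘ Prod.swap : Expr × ℕ → ℕ) = Prod.snd from rfl,
                  List.zipIdx_map_snd, List.mem_range'_1, hlen]; omega
              obtain ⟨q, hq, rfl⟩ := List.mem_map.1 this
              exact ⟨(q.1, q.2.subst σgv), List.mem_map_of_mem hq, rfl⟩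
          -- freeCells removes exactly hr
          have hfree : freeCells l m (h₁ ∪ hr) = h₁ := by
            apply Finmap.ext_lookup
            intro key
            rw [lookup_freeCells]
            split_ifs with hkey
            · obtain ⟨i, him, rfl⟩ := hkey
              have hin : l + i ∈ hr := (hmemr' _).2 ⟨i, him, rfl⟩
              exact ((Finmap.lookup_eq_none.2 (fun hmem1 => hdisj _ hmem1 hin))).symm
            · have hnr : key ∉ hr := fun hk => hkey ((hmemr' key).1 hk)
              by_cases h1 : key ∈ h₁
              · exact Finmap.lookup_union_left h1
              · rw [Finmap.lookup_union_right h1, Finmap.lookup_eq_none.2 hnr,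
                  Finmap.lookup_eq_none.2 h1]
          rw [hfree] at hsteps2
          -- apply the premise validity
          have hsize1 : heapSize h₁ ≤ n := by
            refine le_trans ?_ hsize
            simp only [heapSize, Finmap.keys_union]
            exact Finset.card_le_card (Finset.subset_union_left)
          have hσgv' : IsValSubst σgv (GV Γ ⟨φ, P⟩ Q) := hGV ▸ hσgv
          obtain ⟨σev, hσev, hQ⟩ := hprem h₁ h' s s' hsize1 hsteps2 hkeys σgv hσgv'
            ⟨hpure, hP1⟩
          exact ⟨σev, hEV ▸ hσev, hQ⟩

end SSL
end

section
/- Soundness of the StarPartial rule: for every n ∈ ℕ and every function dictionary Δ, if the specification Σ; Γ; {φ ∧ (x + ι ≠ y + ι'); ⟨x,ι⟩ ↦ e ∗ ⟨y,ι'⟩ ↦ e' ∗ P} c {Q} is n-valid w.r.t. Δ, then the specification Σ; Γ; {φ; ⟨x,ι⟩ ↦ e ∗ ⟨y,ι'⟩ ↦ e' ∗ P} c {Q} is n-valid w.r.t. Δ; this is because any heap–store pair satisfying a precondition containing the two separated heaplets ⟨x,ι⟩ ↦ e and ⟨y,ι'⟩ ↦ e' must have ⟦x⟧ₛ + ι ≠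 ⟦y⟧ₛ + ι' (separating conjunction requires the corresponding singleton sub-heaps to be disjoint), so it also satisfies the strengthened precondition. -/
set_option maxHeartbeats 1000000

namespace SSL

lemma starPartial_vars_eq (φ : Expr) (P : Spatial) (x y : Var) (ι ι' : ℕ) (e e' : Expr) :
    (Assn.vars ⟨.and φ (.not (.eq (.add (.var x) (.lit (ι : Val)))
        (.add (.var y) (.lit (ι' : Val))))),
       .star (.pts (.var x) ι e) (.star (.pts (.var y) ι' e') P)⟩)
    = Assn.vars ⟨φ, .star (.pts (.var x) ι e) (.star (.pts (.var y) ι' e') P)⟩ := by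
  ext a
  simp [Assn.vars, Expr.vars, Spatial.vars]
  tauto

/-- **Soundness of the StarPartial rule**. -/
theorem starPartial_sound
    (I : Interp) (n : ℕ) (Δ : FunDict) (Sg : Ctx) (Γ : Finset Var)
    (φ : Expr) (P : Spatial) (Q : Assn) (x y : Var) (ι ι' : ℕ) (e e' : Expr) (c : Cmd)
    (hprem : Valid I Δ Γ
      ⟨.and φ (.not (.eq (.add (.var x) (.lit (ι : Val))) (.add (.var y) (.lit (ι' : Val))))),
       .star (.pts (.var x) ι e) (.star (.pts (.var y) ι' e') P)⟩ c Q n) :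
    Valid I Δ Γ ⟨φ, .star (.pts (.var x) ι e) (.star (.pts (.var y) ι' e') P)⟩ c Q n := by
  intro h h' s s' hsize hsteps hkeys σgv hσ hsat
  have hvars := starPartial_vars_eq φ P x y ι ι' e e'
  have hGV : GV Γ ⟨.and φ (.not (.eq (.add (.var x) (.lit (ι : Val)))
        (.add (.var y) (.lit (ι' : Val))))),
      .star (.pts (.var x) ι e) (.star (.pts (.var y) ι' e') P)⟩ Q
      = GV Γ ⟨φ, .star (.pts (.var x) ι e) (.star (.pts (.var y) ι' e') P)⟩ Q := by
    simp [GV, hvars]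
  have hEV : EV Γ ⟨.and φ (.not (.eq (.add (.var x) (.lit (ι : Val)))
        (.add (.var y) (.lit (ι' : Val))))),
      .star (.pts (.var x) ι e) (.star (.pts (.var y) ι' e') P)⟩ Q
      = EV Γ ⟨φ, .star (.pts (.var x) ι e) (.star (.pts (.var y) ι' e') P)⟩ Q := by
    simp [EV, hvars]
  obtain ⟨hpure, hspat⟩ := hsat
  -- extract the two points-to heaplets
  obtain ⟨h₁, h₂, hdisj, hun, hs₁, hs₂⟩ := hspat
  obtain ⟨h₂₁, h₂₂, hdisj₂, hun₂, hs₂₁, hs₂₂⟩ := hs₂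
  obtain ⟨l, v, hl, hxe, hev, h₁eq⟩ := hs₁
  obtain ⟨l', v', hl', hye, hev', h₂₁eq⟩ := hs₂₁
  have hne : l + ι ≠ l' + ι' := by
    intro heq
    have hmem : (l + ι) ∈ h₂ := by
      rw [hun₂, heq, h₂₁eq]
      exact Finmap.mem_union.2 (Or.inl (by simp))
    exact hdisj (l + ι) (by rw [h₁eq]; simp) hmem
  -- the strengthened pure part holds
  have hpure' : Expr.holds ((Expr.and φ (.not (.eq (.add (.var x) (.lit (ι : Val)))
      (.add (.var y) (.lit (ι' : Val)))))).subst σgv) s := by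
    have hx : (Expr.subst σgv (.var x)).eval s = some (l : Val) := hxe
    have hy : (Expr.subst σgv (.var y)).eval s = some (l' : Val) := hye
    have hneZ : ((l : Val) + (ι : Val)) ≠ ((l' : Val) + (ι' : Val)) := by
      intro hc
      apply hne
      have : ((l + ι : ℕ) : ℤ) = ((l' + ι' : ℕ) : ℤ) := by push_cast; exact_mod_cast hc
      exact_mod_cast this
    simp only [Expr.holds, Expr.subst, Expr.eval] at hpure ⊢
    simp [Option.bind_eq_some_iff] at hpure ⊢
    exact ⟨hpure, l, hx, l', hy, hneZ⟩
  have hsat' : Sat I h s ((⟨.and φ (.not (.eq (.add (.var x) (.lit (ι : Val)))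
      (.add (.var y) (.lit (ι' : Val))))),
      .star (.pts (.var x) ι e) (.star (.pts (.var y) ι' e') P)⟩ : Assn).subst σgv) := by
    refine ⟨hpure', ?_⟩
    exact ⟨h₁, h₂, hdisj, hun, ⟨l, v, hl, hxe, hev, h₁eq⟩,
      ⟨h₂₁, h₂₂, hdisj₂, hun₂, ⟨l', v', hl', hye, hev', h₂₁eq⟩, hs₂₂⟩⟩
  obtain ⟨σev, hσev, hsatQ⟩ := hprem h h' s s' hsize hsteps hkeys σgv (hGV ▸ hσ) hsat'
  exact ⟨σev, hEV ▸ hσev, hsatQ⟩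

end SSL
end

section
/- Soundness of the UnifyPure rule: for every n ∈ ℕ and every function dictionary Δ, if σ is a substitution with ∅ ≠ dom(σ) ⊆ EV(Γ, {φ ∧ φ'; P}, {ψ ∧ ψ'; Q}) such that [σ]ψ' = φ', and the specification Σ; Γ; {φ ∧ φ'; P} c [σ]{ψ ∧ ψ'; Q} is n-valid w.r.t. Δ, then the specification Σ; Γ; {φ ∧ φ'; P} c {ψ ∧ ψ'; Q} is n-valid w.r.t. Δ. -/
set_option maxHeartbeats 1000000

namespace SSL

/-- Composition of substitutions, pointwise. -/
def Subst.comp (σ μ : Subst) : Subst := fun x =>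
  match σ x with
  | some t => some (t.subst μ)
  | none => μ x

lemma Expr.subst_subst (σ μ : Subst) (e : Expr) :
    (e.subst σ).subst μ = e.subst (Subst.comp σ μ) := by
  induction e with
  | lit v => rfl
  | var x =>
      simp only [Expr.subst, Subst.comp]
      cases σ x with
      | none => rfl
      | some t => rfl
  | add e₁ e₂ ih₁ ih₂ => simp [Expr.subst, ih₁, ih₂]
  | eq e₁ e₂ ih₁ ih₂ => simp [Expr.subst, ih₁, ih₂]
  | and e₁ e₂ ih₁ ih₂ => simp [Expr.subst, ih₁, ih₂]
  | not e ih => simp [Expr.subst, ih]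

lemma Spatial.subst_subst (σ μ : Subst) (S : Spatial) :
    (S.subst σ).subst μ = S.subst (Subst.comp σ μ) := by
  induction S with
  | emp => rfl
  | pts e₁ ι e₂ => simp [Spatial.subst, Expr.subst_subst]
  | blk e m => simp [Spatial.subst, Expr.subst_subst]
  | pred p t args =>
      simp [Spatial.subst, List.map_map, Function.comp_def, Expr.subst_subst]
  | star P Q ihP ihQ => simp [Spatial.subst, ihP, ihQ]

/-- Image of a variable under a substitution. -/
def substImg (ρ : Subst) (x : Var) : Expr := (ρ x).getD (.var x)

lemma eval_subst_mono (ρ₁ ρ₂ : Subst) (s : Store) (e : Expr)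
    (H : ∀ x ∈ e.vars, ∀ w, (substImg ρ₁ x).eval s = some w →
          (substImg ρ₂ x).eval s = some w) :
    ∀ v, (e.subst ρ₁).eval s = some v → (e.subst ρ₂).eval s = some v := by
  induction e with
  | lit v => intro v h; exact h
  | var x =>
      intro v h
      exact H x (by simp [Expr.vars]) v h
  | add e₁ e₂ ih₁ ih₂ =>
      intro v h
      simp only [Expr.subst, Expr.eval, Option.bind_eq_some_iff, Option.pure_def,
        Option.some.injEq, bind] at h ⊢
      obtain ⟨v₁, h₁, v₂, h₂, hv⟩ := h
      exact ⟨v₁, ih₁ (fun x hx => H x (by simp [Expr.vars, hx])) v₁ h₁,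
             v₂, ih₂ (fun x hx => H x (by simp [Expr.vars, hx])) v₂ h₂, hv⟩
  | eq e₁ e₂ ih₁ ih₂ =>
      intro v h
      simp only [Expr.subst, Expr.eval, Option.bind_eq_some_iff, Option.pure_def,
        Option.some.injEq, bind] at h ⊢
      obtain ⟨v₁, h₁, v₂, h₂, hv⟩ := h
      exact ⟨v₁, ih₁ (fun x hx => H x (by simp [Expr.vars, hx])) v₁ h₁,
             v₂, ih₂ (fun x hx => H x (by simp [Expr.vars, hx])) v₂ h₂, hv⟩
  | and e₁ e₂ ih₁ ih₂ =>
      intro v h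
      simp only [Expr.subst, Expr.eval, Option.bind_eq_some_iff, Option.pure_def,
        Option.some.injEq, bind] at h ⊢
      obtain ⟨v₁, h₁, v₂, h₂, hv⟩ := h
      exact ⟨v₁, ih₁ (fun x hx => H x (by simp [Expr.vars, hx])) v₁ h₁,
             v₂, ih₂ (fun x hx => H x (by simp [Expr.vars, hx])) v₂ h₂, hv⟩
  | not e ih =>
      intro v h
      simp only [Expr.subst, Expr.eval, Option.bind_eq_some_iff, Option.pure_def,
        Option.some.injEq, bind] at h ⊢
      obtain ⟨v₁, h₁, hv⟩ := h
      exact ⟨v₁, ih (fun x hx => H x (by simp [Expr.vars, hx])) v₁ h₁, hv⟩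

lemma evalList_mono (ρ₁ ρ₂ : Subst) (s : Store) (args : List Expr)
    (H : ∀ x ∈ args.foldr (fun e acc => e.vars ∪ acc) ∅, ∀ w,
          (substImg ρ₁ x).eval s = some w → (substImg ρ₂ x).eval s = some w) :
    ∀ vs, evalList (args.map (Expr.subst ρ₁)) s = some vs →
      evalList (args.map (Expr.subst ρ₂)) s = some vs := by
  induction args with
  | nil => intro vs h; exact h
  | cons a as ih =>
      intro vs h
      simp only [evalList, List.map_cons, List.mapM_cons, Option.bind_eq_some_iff,
        Option.pure_def, Option.some.injEq, bind] at h ⊢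
      obtain ⟨v, hv, vs', hvs', rfl⟩ := h
      refine ⟨v, eval_subst_mono ρ₁ ρ₂ s a (fun x hx => H x (by simp [hx])) v hv, vs', ?_, rfl⟩
      exact ih (fun x hx => H x (by simp [hx])) vs' hvs'

lemma satS_subst_mono (I : Interp) (ρ₁ ρ₂ : Subst) (s : Store) (S : Spatial)
    (H : ∀ x ∈ S.vars, ∀ w, (substImg ρ₁ x).eval s = some w →
          (substImg ρ₂ x).eval s = some w) :
    ∀ h : Heap, SatS I h s (S.subst ρ₁) → SatS I h s (S.subst ρ₂) := by
  induction S with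
  | emp => intro h hs; exact hs
  | pts e₁ ι e₂ =>
      intro h hs
      obtain ⟨l, v, hl, h₁, h₂, rfl⟩ := hs
      exact ⟨l, v, hl,
        eval_subst_mono ρ₁ ρ₂ s e₁ (fun x hx => H x (by simp [Spatial.vars, hx])) _ h₁,
        eval_subst_mono ρ₁ ρ₂ s e₂ (fun x hx => H x (by simp [Spatial.vars, hx])) _ h₂, rfl⟩
  | blk e m => intro h hs; exact hs
  | pred p t args =>
      intro h hs
      obtain ⟨vs, hvs, hI⟩ := hs
      exact ⟨vs, evalList_mono ρ₁ ρ₂ s args (fun x hx => H x hx) vs hvs, hI⟩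
  | star P Q ihP ihQ =>
      intro h hs
      obtain ⟨h₁, h₂, hd, rfl, hP, hQ⟩ := hs
      exact ⟨h₁, h₂, hd, rfl,
        ihP (fun x hx => H x (by simp [Spatial.vars, hx])) h₁ hP,
        ihQ (fun x hx => H x (by simp [Spatial.vars, hx])) h₂ hQ⟩

/-- **Soundness of the UnifyPure rule**. -/
theorem unifyPure_sound
    (I : Interp) (n : ℕ) (Δ : FunDict) (Sg : Ctx) (Γ : Finset Var)
    (φ φ' ψ ψ' : Expr) (P Q : Spatial) (σ : Subst) (c : Cmd)
    (hunif : ψ'.subst σ = φ')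
    (hdom₁ : σ.domain ≠ ∅)
    (hdom₂ : σ.domain ⊆ ↑(EV Γ ⟨.and φ φ', P⟩ ⟨.and ψ ψ', Q⟩))
    (hprem : Valid I Δ Γ ⟨.and φ φ', P⟩ c (Assn.subst ⟨.and ψ ψ', Q⟩ σ) n) :
    Valid I Δ Γ ⟨.and φ φ', P⟩ c ⟨.and ψ ψ', Q⟩ n := by
  intro h h' s s' hsize hsteps hkeys σgv hgv hsat
  obtain ⟨σev', hev', hsat'⟩ := hprem h h' s s' hsize hsteps hkeys σgv hgv hsat
  classical
  set P' : Assn := ⟨.and φ φ', P⟩ with hP'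
  set Q' : Assn := ⟨.and ψ ψ', Q⟩ with hQ'
  set μ : Subst := σev'.union σgv with hμ
  set ρ₁ : Subst := Subst.comp σ μ with hρ₁
  set τ : Subst := fun x => if x ∈ EV Γ P' Q' then
      some (.lit ((((ρ₁ x).getD (.var x)).eval s').getD 0)) else none with hτ
  have H : ∀ x ∈ Q'.vars, ∀ w, (substImg ρ₁ x).eval s' = some w →
      (substImg (τ.union σgv) x).eval s' = some w := by
    intro x hx w hw
    by_cases hEV : x ∈ EV Γ P' Q'
    · have e2 : (τ.union σgv) x
          = some (.lit ((((ρ₁ x).getD (.var x)).eval s').getD 0)) := by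
        simp [Subst.union, hτ, hEV]
      rw [substImg] at hw
      rw [substImg, e2, hw]
      simp [Expr.eval]
    · have hxin : x ∈ Γ ∪ P'.vars := by
        by_contra hc
        exact hEV (Finset.mem_sdiff.mpr ⟨hx, hc⟩)
      have hσx : σ x = none := by
        cases hσ : σ x with
        | none => rfl
        | some t =>
          exfalso
          apply hEV
          have hdx : x ∈ σ.domain := by simp [Subst.domain, hσ]
          exact hdom₂ hdx
      have hσev : σev' x = none := by
        cases hσe : σev' x with
        | none => rfl
        | some t =>
          exfalso
          have hmem : x ∈ EV Γ P' (Q'.subst σ) := (hev'.1 x).mpr (by simp [hσe])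
          exact (Finset.mem_sdiff.mp hmem).2 hxin
      have e1 : ρ₁ x = σgv x := by
        simp [hρ₁, Subst.comp, hσx, hμ, Subst.union, hσev]
      have e2 : (τ.union σgv) x = σgv x := by
        simp [Subst.union, hτ, hEV]
      rw [substImg, e2]
      rw [substImg, e1] at hw
      exact hw
  refine ⟨τ, ⟨?_, ?_⟩, ?_, ?_⟩
  · intro x
    by_cases hEV : x ∈ EV Γ P' Q' <;> simp [hτ, hEV]
  · intro x e hxe
    by_cases hEV : x ∈ EV Γ P' Q' <;> simp [hτ, hEV] at hxe
    exact ⟨_, hxe.symm⟩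
  · obtain ⟨hpure, _⟩ := hsat'
    have hpure' : (Q'.pure.subst ρ₁).eval s' = some 1 := by
      rw [hρ₁, ← Expr.subst_subst]
      exact hpure
    exact eval_subst_mono ρ₁ (τ.union σgv) s' Q'.pure
      (fun x hx => H x (Finset.mem_union_left _ hx)) 1 hpure'
  · obtain ⟨_, hspat⟩ := hsat'
    have hspat' : SatS I h' s' (Q'.spat.subst ρ₁) := by
      rw [hρ₁, ← Spatial.subst_subst]
      exact hspat
    exact satS_subst_mono I ρ₁ (τ.union σgv) s' Q'.spat
      (fun x hx => H x (Finset.mem_union_right _ hx)) h' hspat'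

end SSL
end
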